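/- There exist a positive integer L_Z and, for each of the seven nodes A1, A2, A3, A4, B1, B2, B3, matrices F_v ∈ F_3^{5×4} and H_v ∈ F_3^{5×L_Z} with each H_v of full row rank 5, such that the correctness condition (with L = 4) holds for the five pairs {A1,B1}, {A4,B1}, {A4,B2}, {A4,B3}, {A3,B3}, and the security condition holds for the three pairs {A1,B2}, {A3,B2}, {A3,B1}. Consequently the linear rate 2/5 is achievable for this CDS instance. -/

import Mathlib

open Matrix

/-- The row space of a matrix: the span of its rows in `Fin LZ → F`. -/
noncomputable def rowSpan {F : Type} [Field F] {N LZ : ℕ}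
    (H : Matrix (Fin N) (Fin LZ) F) : Submodule F (Fin LZ → F) :=
  Submodule.span F (Set.range H)

/-- Linear correctness condition for a (qualified) pair of nodes. -/
def CorrectPair (F : Type) [Field F] (L N LZ : ℕ)
    (Fv Fu : Matrix (Fin N) (Fin L) F) (Hv Hu : Matrix (Fin N) (Fin LZ) F) : Prop :=
  ∀ (k : ℕ) (Pv Pu : Matrix (Fin k) (Fin N) F),
    Pv * Hv = Pu * Hu →
    Pv.rank = Module.finrank F ↥(rowSpan Hv ⊓ rowSpan Hu) →
    Pu.rank = Module.finrank F ↥(rowSpan Hv ⊓ rowSpan Hu) →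
    (Pv * Fv - Pu * Fu).rank = L

/-- Linear security condition for an (unqualified) pair of nodes. -/
def SecurePair (F : Type) [Field F] (L N LZ : ℕ)
    (Fv Fu : Matrix (Fin N) (Fin L) F) (Hv Hu : Matrix (Fin N) (Fin LZ) F) : Prop :=
  ∀ (k : ℕ) (Pv Pu : Matrix (Fin k) (Fin N) F),
    Pv * Hv = Pu * Hu → Pv * Fv = Pu * Fu

instance : Fact (Nat.Prime 3) := ⟨by norm_num⟩

/-- The seven nodes of the CDS instance of Figure 2. -/
inductive Node7 : Type
  | A1 | A2 | A3 | A4 | B1 | B2 | B3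

open Node7

namespace CDSAux

variable {K : Type} [Field K]


variable {K : Type} [Field K]

lemma row_mem_rowSpan {N LZ : ℕ} (H : Matrix (Fin N) (Fin LZ) K) (a : Fin N → K) :
    a ᵥ* H ∈ rowSpan H := by
  rw [rowSpan, show Set.range H = Set.range H.row from rfl, ← range_vecMulLinear]
  exact ⟨a, rfl⟩

lemma mul_row_eq_vecMul {m n p : ℕ} (A : Matrix (Fin m) (Fin n) K)
    (B : Matrix (Fin n) (Fin p) K) (i : Fin m) : (A * B) i = A i ᵥ* B := by
  ext j
  simp [Matrix.mul_apply, Matrix.vecMul, dotProduct]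

lemma factor {k d LZ N : ℕ} {Hv Hu : Matrix (Fin N) (Fin LZ) K}
    {Kv Ku : Matrix (Fin LZ) (Fin N) K} {C : Matrix (Fin d) (Fin LZ) K}
    {Av Au : Matrix (Fin d) (Fin N) K} {G : Matrix (Fin LZ) (Fin d) K}
    {Ev Eu : Matrix (Fin LZ) (Fin LZ) K}
    (hKv : Hv * Kv = 1) (hKu : Hu * Ku = 1)
    (hAv : Av * Hv = C) (hAu : Au * Hu = C)
    (hEv : Hv * Ev = 0) (hEu : Hu * Eu = 0) (hE : Ev + Eu = 1 - G * C)
    {Pv Pu : Matrix (Fin k) (Fin N) K} (h : Pv * Hv = Pu * Hu) :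
    Pv = (Pv * Hv * G) * Av ∧ Pu = (Pv * Hv * G) * Au := by
  have hGC : G * C = 1 - (Ev + Eu) := by rw [hE]; abel
  have hMC : (Pv * Hv * G) * C = Pv * Hv := by
    calc Pv * Hv * G * C = Pv * Hv * (G * C) := by rw [Matrix.mul_assoc]
      _ = Pv * Hv * (1 : Matrix (Fin LZ) (Fin LZ) K)
            - (Pv * (Hv * Ev) + Pu * (Hu * Eu)) := by
          rw [hGC, Matrix.mul_sub, Matrix.mul_add, Matrix.mul_assoc, Matrix.mul_assoc, h, Matrix.mul_assoc]
      _ = Pv * Hv := by rw [hEv, hEu, Matrix.mul_zero, Matrix.mul_zero, add_zero, sub_zero,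
            Matrix.mul_one]
  constructor
  · have h2 : (Pv * Hv * G) * Av * Hv = Pv * Hv := by
      rw [Matrix.mul_assoc _ Av Hv, hAv, hMC]
    calc Pv = Pv * Hv * Kv := by rw [Matrix.mul_assoc, hKv, Matrix.mul_one]
      _ = (Pv * Hv * G) * Av * (Hv * Kv) := by rw [← Matrix.mul_assoc, h2]
      _ = (Pv * Hv * G) * Av := by rw [hKv, Matrix.mul_one]
  · have h2 : (Pv * Hv * G) * Au * Hu = Pu * Hu := by
      rw [Matrix.mul_assoc _ Au Hu, hAu, hMC, h]
    calc Pu = Pu * Hu * Ku := by rw [Matrix.mul_assoc, hKu, Matrix.mul_one]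
      _ = (Pv * Hv * G) * Au * (Hu * Ku) := by rw [← Matrix.mul_assoc, h2]
      _ = (Pv * Hv * G) * Au := by rw [hKu, Matrix.mul_one]

lemma secure_cert {d LZ N L : ℕ} {Fv Fu : Matrix (Fin N) (Fin L) K}
    {Hv Hu : Matrix (Fin N) (Fin LZ) K}
    {Kv Ku : Matrix (Fin LZ) (Fin N) K} {C : Matrix (Fin d) (Fin LZ) K}
    {Av Au : Matrix (Fin d) (Fin N) K} {G : Matrix (Fin LZ) (Fin d) K}
    {Ev Eu : Matrix (Fin LZ) (Fin LZ) K}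
    (hKv : Hv * Kv = 1) (hKu : Hu * Ku = 1)
    (hAv : Av * Hv = C) (hAu : Au * Hu = C)
    (hEv : Hv * Ev = 0) (hEu : Hu * Eu = 0) (hE : Ev + Eu = 1 - G * C)
    (hD : Av * Fv = Au * Fu) :
    SecurePair K L N LZ Fv Fu Hv Hu := by
  intro k Pv Pu h
  obtain ⟨hv, hu⟩ := factor hKv hKu hAv hAu hEv hEu hE h
  rw [hv, hu, Matrix.mul_assoc (Pv * Hv * G) Av Fv, Matrix.mul_assoc (Pv * Hv * G) Au Fu, hD]

lemma rowSpan_inter_eq {d LZ N : ℕ} {Hv Hu : Matrix (Fin N) (Fin LZ) K}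
    {C : Matrix (Fin d) (Fin LZ) K}
    {Av Au : Matrix (Fin d) (Fin N) K} {G : Matrix (Fin LZ) (Fin d) K}
    {Ev Eu : Matrix (Fin LZ) (Fin LZ) K}
    (hAv : Av * Hv = C) (hAu : Au * Hu = C)
    (hEv : Hv * Ev = 0) (hEu : Hu * Eu = 0) (hE : Ev + Eu = 1 - G * C) :
    rowSpan Hv ⊓ rowSpan Hu = rowSpan C := by
  have hGC : G * C = 1 - (Ev + Eu) := by rw [hE]; abel
  apply le_antisymm
  · rintro x ⟨hxv, hxu⟩
    rw [rowSpan, show Set.range Hv = Set.range Hv.row from rfl, ← range_vecMulLinear] at hxv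
    rw [rowSpan, show Set.range Hu = Set.range Hu.row from rfl, ← range_vecMulLinear] at hxu
    rw [rowSpan, show Set.range C = Set.range C.row from rfl, ← range_vecMulLinear]
    obtain ⟨a, ha⟩ := hxv
    obtain ⟨b, hb⟩ := hxu
    simp only [Matrix.vecMulLinear_apply] at ha hb ⊢
    refine ⟨x ᵥ* G, ?_⟩
    have hstep : (x ᵥ* G) ᵥ* C = x ᵥ* (G * C) := by rw [Matrix.vecMul_vecMul]
    have h1 : x ᵥ* Ev = 0 := by
      rw [← ha, Matrix.vecMul_vecMul, hEv, Matrix.vecMul_zero]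
    have h2 : x ᵥ* Eu = 0 := by
      rw [← hb, Matrix.vecMul_vecMul, hEu, Matrix.vecMul_zero]
    show (x ᵥ* G) ᵥ* C = x
    rw [hstep, hGC, Matrix.vecMul_sub, Matrix.vecMul_add, Matrix.vecMul_one, h1, h2,
      add_zero, sub_zero]
  · refine le_inf ?_ ?_
    · rw [rowSpan, Submodule.span_le]
      rintro x ⟨i, rfl⟩
      rw [← hAv, mul_row_eq_vecMul]
      exact row_mem_rowSpan Hv (Av i)
    · rw [rowSpan, Submodule.span_le]
      rintro x ⟨i, rfl⟩
      rw [← hAu, mul_row_eq_vecMul]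
      exact row_mem_rowSpan Hu (Au i)

lemma finrank_rowSpan {d LZ : ℕ} {C : Matrix (Fin d) (Fin LZ) K}
    {G : Matrix (Fin LZ) (Fin d) K} (hG : C * G = 1) :
    Module.finrank K (rowSpan C) = d := by
  have hinj : Function.Injective C.vecMulLinear := by
    intro y y' hyy
    simp only [Matrix.vecMulLinear_apply] at hyy
    have : (y ᵥ* C) ᵥ* G = (y' ᵥ* C) ᵥ* G := by rw [hyy]
    rwa [Matrix.vecMul_vecMul, Matrix.vecMul_vecMul, hG, Matrix.vecMul_one,
      Matrix.vecMul_one] at this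
  have := LinearMap.finrank_range_of_inj hinj
  rw [Module.finrank_pi, Fintype.card_fin] at this
  rw [rowSpan, show Set.range C = Set.range C.row from rfl, ← range_vecMulLinear]
  exact this

lemma rank_eq_of_rightInv {N LZ : ℕ} {H : Matrix (Fin N) (Fin LZ) K}
    {Kv : Matrix (Fin LZ) (Fin N) K} (hK : H * Kv = 1) : H.rank = N := by
  have h1 : H.rank ≤ N := Matrix.rank_le_height H
  have h2 : (H * Kv).rank ≤ H.rank := Matrix.rank_mul_le_left H Kv
  rw [hK, Matrix.rank_one, Fintype.card_fin] at h2
  omega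

lemma mulVecLin_inj_of_rank {k d : ℕ} {M : Matrix (Fin k) (Fin d) K} (h : M.rank = d) :
    Function.Injective M.mulVecLin := by
  rw [← LinearMap.ker_eq_bot]
  have h2 := LinearMap.finrank_range_add_finrank_ker M.mulVecLin
  rw [Module.finrank_pi, Fintype.card_fin] at h2
  have h3 : M.rank = Module.finrank K (LinearMap.range M.mulVecLin) := rfl
  have h4 : Module.finrank K (LinearMap.ker M.mulVecLin) = 0 := by omega
  exact Submodule.finrank_eq_zero.mp h4

lemma rank_mul_eq_of_inj {k d L : ℕ} (M : Matrix (Fin k) (Fin d) K)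
    (D : Matrix (Fin d) (Fin L) K) (h : Function.Injective M.mulVecLin) :
    (M * D).rank = D.rank := by
  rw [Matrix.rank, Matrix.rank, Matrix.mulVecLin_mul, LinearMap.range_comp]
  exact ((Submodule.equivMapOfInjective M.mulVecLin h _).symm).finrank_eq

lemma correct_cert {d LZ N L : ℕ} {Fv Fu : Matrix (Fin N) (Fin L) K}
    {Hv Hu : Matrix (Fin N) (Fin LZ) K}
    {Kv Ku : Matrix (Fin LZ) (Fin N) K} {C : Matrix (Fin d) (Fin LZ) K}
    {Av Au : Matrix (Fin d) (Fin N) K} {G : Matrix (Fin LZ) (Fin d) K}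
    {Ev Eu : Matrix (Fin LZ) (Fin LZ) K} {B : Matrix (Fin L) (Fin d) K}
    (hKv : Hv * Kv = 1) (hKu : Hu * Ku = 1)
    (hAv : Av * Hv = C) (hAu : Au * Hu = C)
    (hEv : Hv * Ev = 0) (hEu : Hu * Eu = 0) (hE : Ev + Eu = 1 - G * C)
    (hG : C * G = 1)
    (hB : B * (Av * Fv - Au * Fu) = 1) :
    CorrectPair K L N LZ Fv Fu Hv Hu := by
  intro k Pv Pu h hrv _
  obtain ⟨hv, hu⟩ := factor hKv hKu hAv hAu hEv hEu hE h
  have hfin : Module.finrank K ↥(rowSpan Hv ⊓ rowSpan Hu) = d := by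
    rw [rowSpan_inter_eq hAv hAu hEv hEu hE]
    exact finrank_rowSpan hG
  set M := Pv * Hv * G with hM
  have hMrank : M.rank = d := by
    have h1 : M.rank ≤ d := Matrix.rank_le_width M
    have h2 : Pv.rank ≤ M.rank := by
      rw [hv]; exact Matrix.rank_mul_le_left M Av
    rw [hrv, hfin] at h2
    omega
  have hinj := mulVecLin_inj_of_rank hMrank
  have hsplit : Pv * Fv - Pu * Fu = M * (Av * Fv - Au * Fu) := by
    rw [hv, hu, Matrix.mul_sub, Matrix.mul_assoc M Av Fv, Matrix.mul_assoc M Au Fu]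
  rw [hsplit, rank_mul_eq_of_inj _ _ hinj]
  have hle : (Av * Fv - Au * Fu).rank ≤ L := Matrix.rank_le_width _
  have hge : (B * (Av * Fv - Au * Fu)).rank ≤ (Av * Fv - Au * Fu).rank :=
    Matrix.rank_mul_le_right _ _
  rw [hB, Matrix.rank_one, Fintype.card_fin] at hge
  omega

end CDSAux

set_option maxRecDepth 10000

namespace CDSData
open CDSAux
def HA1 : Matrix (Fin 5) (Fin 10) (ZMod 3) := !![0,0,0,1,1,2,2,0,2,2;1,1,0,2,1,0,0,0,0,0;2,2,0,2,2,1,1,0,1,1;2,1,0,2,2,0,0,0,0,0;2,0,0,0,0,0,1,1,2,1]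
def FA1 : Matrix (Fin 5) (Fin 4) (ZMod 3) := !![0,1,1,2;0,1,0,2;0,2,0,0;1,2,0,0;2,0,2,2]
def KA1 : Matrix (Fin 10) (Fin 5) (ZMod 3) := !![0,0,0,0,2;2,0,2,0,1;0,0,0,0,0;2,1,2,1,1;0,2,0,1,1;1,0,2,2,2;0,0,0,0,0;0,0,0,0,0;0,0,0,0,0;0,0,0,0,0]
lemma hKA1 : HA1 * KA1 = 1 := by decide
def HA3 : Matrix (Fin 5) (Fin 10) (ZMod 3) := !![0,1,2,1,1,2,0,1,1,2;0,1,2,2,1,1,0,2,2,1;1,2,2,0,0,1,0,2,2,1;1,2,1,2,2,1,0,2,2,1;2,1,2,0,1,2,2,0,1,1]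
def FA3 : Matrix (Fin 5) (Fin 4) (ZMod 3) := !![2,0,0,2;2,1,2,2;1,1,0,2;2,1,2,0;1,2,1,1]
def KA3 : Matrix (Fin 10) (Fin 5) (ZMod 3) := !![1,0,0,1,0;2,2,1,0,1;0,0,1,0,1;0,0,0,2,2;0,0,0,0,0;1,2,0,2,2;0,0,0,0,0;0,0,0,0,0;0,0,0,0,0;0,0,0,0,0]
lemma hKA3 : HA3 * KA3 = 1 := by decide
def HA4 : Matrix (Fin 5) (Fin 10) (ZMod 3) := !![1,0,0,0,0,0,0,0,0,0;0,1,0,0,0,0,0,0,0,0;0,0,1,0,0,0,0,0,0,0;0,0,0,1,0,0,0,0,0,0;0,0,0,0,1,0,0,0,0,0]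
def FA4 : Matrix (Fin 5) (Fin 4) (ZMod 3) := !![2,2,0,0;0,2,1,0;1,1,0,1;2,1,0,0;1,1,0,2]
def KA4 : Matrix (Fin 10) (Fin 5) (ZMod 3) := !![1,0,0,0,0;0,1,0,0,0;0,0,1,0,0;0,0,0,1,0;0,0,0,0,1;0,0,0,0,0;0,0,0,0,0;0,0,0,0,0;0,0,0,0,0;0,0,0,0,0]
lemma hKA4 : HA4 * KA4 = 1 := by decide
def HB1 : Matrix (Fin 5) (Fin 10) (ZMod 3) := !![1,0,0,1,0,0,0,0,0,0;1,1,2,1,1,0,0,0,0,0;1,2,1,0,0,0,0,0,0,0;1,0,1,0,2,0,0,0,0,0;2,2,0,0,1,1,1,0,1,1]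
def FB1 : Matrix (Fin 5) (Fin 4) (ZMod 3) := !![0,2,1,2;2,1,2,1;2,2,0,2;1,0,0,0;2,0,1,0]
def KB1 : Matrix (Fin 10) (Fin 5) (ZMod 3) := !![0,0,1,2,2;2,1,2,2,1;2,1,2,0,2;1,0,2,1,1;2,1,0,1,1;0,0,0,0,0;0,0,0,0,0;0,0,0,0,0;0,0,0,0,0;0,0,0,0,0]
lemma hKB1 : HB1 * KB1 = 1 := by decide
def HB2 : Matrix (Fin 5) (Fin 10) (ZMod 3) := !![2,2,2,1,1,0,0,0,0,0;2,0,1,0,1,0,0,0,0,0;2,1,1,0,0,0,0,0,0,0;2,0,0,1,2,0,0,0,0,0;1,0,1,0,1,2,2,1,0,2]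
def FB2 : Matrix (Fin 5) (Fin 4) (ZMod 3) := !![2,0,2,0;2,2,2,2;1,1,1,2;1,2,0,0;1,1,1,1]
def KB2 : Matrix (Fin 10) (Fin 5) (ZMod 3) := !![0,1,0,0,2;2,1,0,1,1;1,0,1,2,1;2,0,2,2,0;2,2,2,1,1;0,0,0,0,0;0,0,0,0,0;0,0,0,0,0;0,0,0,0,0;0,0,0,0,0]
lemma hKB2 : HB2 * KB2 = 1 := by decide
def HB3 : Matrix (Fin 5) (Fin 10) (ZMod 3) := !![2,1,0,1,2,0,0,0,0,0;1,1,0,2,0,0,0,0,0,0;0,1,2,1,2,0,0,0,0,0;2,2,1,2,1,0,0,0,0,0;1,2,0,1,2,2,0,1,1,2]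
def FB3 : Matrix (Fin 5) (Fin 4) (ZMod 3) := !![0,0,0,0;0,2,1,1;0,1,1,1;0,2,2,0;2,2,2,2]
def KB3 : Matrix (Fin 10) (Fin 5) (ZMod 3) := !![0,0,2,2,0;2,0,2,2,1;1,0,1,2,0;2,2,1,1,1;0,2,1,1,2;0,0,0,0,0;0,0,0,0,0;0,0,0,0,0;0,0,0,0,0;0,0,0,0,0]
lemma hKB3 : HB3 * KB3 = 1 := by decide
def CA1B1 : Matrix (Fin 4) (Fin 10) (ZMod 3) := !![1,0,0,0,0,2,2,0,2,2;0,1,0,0,0,1,1,0,1,1;0,0,0,1,0,1,1,0,1,1;0,0,0,0,1,1,1,0,1,1]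
def AvA1B1 : Matrix (Fin 4) (Fin 5) (ZMod 3) := !![2,0,1,1,0;0,0,1,2,0;0,1,1,0,0;1,2,2,0,0]
def AuA1B1 : Matrix (Fin 4) (Fin 5) (ZMod 3) := !![0,0,1,2,2;2,1,2,2,1;1,0,2,1,1;2,1,0,1,1]
def GA1B1 : Matrix (Fin 10) (Fin 4) (ZMod 3) := !![1,0,0,0;0,1,0,0;0,0,0,0;0,0,1,0;0,0,0,1;0,0,0,0;0,0,0,0;0,0,0,0;0,0,0,0;0,0,0,0]
def EvA1B1 : Matrix (Fin 10) (Fin 10) (ZMod 3) := !![0,0,0,0,0,0,1,1,2,1;0,0,0,0,0,0,2,2,1,2;0,0,1,0,0,2,0,1,1,0;0,0,0,0,0,0,2,2,1,2;0,0,0,0,0,0,2,2,1,2;0,0,0,0,0,0,0,1,1,0;0,0,0,0,0,0,1,0,0,0;0,0,0,0,0,0,0,1,0,0;0,0,0,0,0,0,0,0,1,0;0,0,0,0,0,0,0,0,0,1]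
def EuA1B1 : Matrix (Fin 10) (Fin 10) (ZMod 3) := !![0,0,0,0,0,1,0,2,2,0;0,0,0,0,0,2,0,1,1,0;0,0,0,0,0,1,0,2,2,0;0,0,0,0,0,2,0,1,1,0;0,0,0,0,0,2,0,1,1,0;0,0,0,0,0,1,0,2,2,0;0,0,0,0,0,0,0,0,0,0;0,0,0,0,0,0,0,0,0,0;0,0,0,0,0,0,0,0,0,0;0,0,0,0,0,0,0,0,0,0]
lemma hAvA1B1 : AvA1B1 * HA1 = CA1B1 := by decide
lemma hAuA1B1 : AuA1B1 * HB1 = CA1B1 := by decide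
lemma hEvA1B1 : HA1 * EvA1B1 = 0 := by decide
lemma hEuA1B1 : HB1 * EuA1B1 = 0 := by decide
lemma hEA1B1 : EvA1B1 + EuA1B1 = 1 - GA1B1 * CA1B1 := by decide
def BA1B1 : Matrix (Fin 4) (Fin 4) (ZMod 3) := !![1,1,0,1;0,0,2,2;2,0,0,2;1,2,2,1]
lemma hGA1B1 : CA1B1 * GA1B1 = 1 := by decide
lemma hBA1B1 : BA1B1 * (AvA1B1 * FA1 - AuA1B1 * FB1) = 1 := by decide
def CA4B1 : Matrix (Fin 4) (Fin 10) (ZMod 3) := !![1,0,0,0,1,0,0,0,0,0;0,1,0,0,2,0,0,0,0,0;0,0,1,0,1,0,0,0,0,0;0,0,0,1,2,0,0,0,0,0]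
def AvA4B1 : Matrix (Fin 4) (Fin 5) (ZMod 3) := !![1,0,0,0,1;0,1,0,0,2;0,0,1,0,1;0,0,0,1,2]
def AuA4B1 : Matrix (Fin 4) (Fin 5) (ZMod 3) := !![2,1,1,0,0;0,0,2,1,0;1,2,2,1,0;2,2,2,0,0]
def GA4B1 : Matrix (Fin 10) (Fin 4) (ZMod 3) := !![1,0,0,0;0,1,0,0;0,0,1,0;0,0,0,1;0,0,0,0;0,0,0,0;0,0,0,0;0,0,0,0;0,0,0,0;0,0,0,0]
def EvA4B1 : Matrix (Fin 10) (Fin 10) (ZMod 3) := !![0,0,0,0,0,0,0,0,0,0;0,0,0,0,0,0,0,0,0,0;0,0,0,0,0,0,0,0,0,0;0,0,0,0,0,0,0,0,0,0;0,0,0,0,0,0,0,0,0,0;0,0,0,0,1,1,0,0,0,0;0,0,0,0,0,0,1,0,0,0;0,0,0,0,0,0,0,1,0,0;0,0,0,0,0,0,0,0,1,0;0,0,0,0,0,0,0,0,0,1]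
def EuA4B1 : Matrix (Fin 10) (Fin 10) (ZMod 3) := !![0,0,0,0,2,0,0,0,0,0;0,0,0,0,1,0,0,0,0,0;0,0,0,0,2,0,0,0,0,0;0,0,0,0,1,0,0,0,0,0;0,0,0,0,1,0,0,0,0,0;0,0,0,0,2,0,0,0,0,0;0,0,0,0,0,0,0,0,0,0;0,0,0,0,0,0,0,0,0,0;0,0,0,0,0,0,0,0,0,0;0,0,0,0,0,0,0,0,0,0]
lemma hAvA4B1 : AvA4B1 * HA4 = CA4B1 := by decide
lemma hAuA4B1 : AuA4B1 * HB1 = CA4B1 := by decide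
lemma hEvA4B1 : HA4 * EvA4B1 = 0 := by decide
lemma hEuA4B1 : HB1 * EuA4B1 = 0 := by decide
lemma hEA4B1 : EvA4B1 + EuA4B1 = 1 - GA4B1 * CA4B1 := by decide
def BA4B1 : Matrix (Fin 4) (Fin 4) (ZMod 3) := !![1,2,2,2;2,1,1,0;0,1,0,0;1,1,0,2]
lemma hGA4B1 : CA4B1 * GA4B1 = 1 := by decide
lemma hBA4B1 : BA4B1 * (AvA4B1 * FA4 - AuA4B1 * FB1) = 1 := by decide
def CA4B2 : Matrix (Fin 4) (Fin 10) (ZMod 3) := !![1,0,0,0,1,0,0,0,0,0;0,1,0,0,2,0,0,0,0,0;0,0,1,0,2,0,0,0,0,0;0,0,0,1,0,0,0,0,0,0]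
def AvA4B2 : Matrix (Fin 4) (Fin 5) (ZMod 3) := !![1,0,0,0,1;0,1,0,0,2;0,0,1,0,2;0,0,0,1,0]
def AuA4B2 : Matrix (Fin 4) (Fin 5) (ZMod 3) := !![2,0,2,1,0;0,2,1,0,0;2,1,2,1,0;2,0,2,2,0]
def GA4B2 : Matrix (Fin 10) (Fin 4) (ZMod 3) := !![1,0,0,0;0,1,0,0;0,0,1,0;0,0,0,1;0,0,0,0;0,0,0,0;0,0,0,0;0,0,0,0;0,0,0,0;0,0,0,0]
def EvA4B2 : Matrix (Fin 10) (Fin 10) (ZMod 3) := !![0,0,0,0,0,0,0,0,0,0;0,0,0,0,0,0,0,0,0,0;0,0,0,0,0,0,0,0,0,0;0,0,0,0,0,0,0,0,0,0;0,0,0,0,0,0,0,0,0,0;0,0,0,0,2,1,0,0,0,0;0,0,0,0,0,0,1,0,0,0;0,0,0,0,0,0,0,1,0,0;0,0,0,0,0,0,0,0,1,0;0,0,0,0,0,0,0,0,0,1]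
def EuA4B2 : Matrix (Fin 10) (Fin 10) (ZMod 3) := !![0,0,0,0,2,0,0,0,0,0;0,0,0,0,1,0,0,0,0,0;0,0,0,0,1,0,0,0,0,0;0,0,0,0,0,0,0,0,0,0;0,0,0,0,1,0,0,0,0,0;0,0,0,0,1,0,0,0,0,0;0,0,0,0,0,0,0,0,0,0;0,0,0,0,0,0,0,0,0,0;0,0,0,0,0,0,0,0,0,0;0,0,0,0,0,0,0,0,0,0]
lemma hAvA4B2 : AvA4B2 * HA4 = CA4B2 := by decide
lemma hAuA4B2 : AuA4B2 * HB2 = CA4B2 := by decide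
lemma hEvA4B2 : HA4 * EvA4B2 = 0 := by decide
lemma hEuA4B2 : HB2 * EuA4B2 = 0 := by decide
lemma hEA4B2 : EvA4B2 + EuA4B2 = 1 - GA4B2 * CA4B2 := by decide
def BA4B2 : Matrix (Fin 4) (Fin 4) (ZMod 3) := !![2,0,0,2;0,2,2,0;0,2,0,2;0,2,2,2]
lemma hGA4B2 : CA4B2 * GA4B2 = 1 := by decide
lemma hBA4B2 : BA4B2 * (AvA4B2 * FA4 - AuA4B2 * FB2) = 1 := by decide
def CA4B3 : Matrix (Fin 4) (Fin 10) (ZMod 3) := !![1,0,0,0,0,0,0,0,0,0;0,1,0,0,1,0,0,0,0,0;0,0,1,0,0,0,0,0,0,0;0,0,0,1,1,0,0,0,0,0]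
def AvA4B3 : Matrix (Fin 4) (Fin 5) (ZMod 3) := !![1,0,0,0,0;0,1,0,0,1;0,0,1,0,0;0,0,0,1,1]
def AuA4B3 : Matrix (Fin 4) (Fin 5) (ZMod 3) := !![0,0,2,2,0;2,2,0,0,0;1,0,1,2,0;2,1,2,2,0]
def GA4B3 : Matrix (Fin 10) (Fin 4) (ZMod 3) := !![1,0,0,0;0,1,0,0;0,0,1,0;0,0,0,1;0,0,0,0;0,0,0,0;0,0,0,0;0,0,0,0;0,0,0,0;0,0,0,0]
def EvA4B3 : Matrix (Fin 10) (Fin 10) (ZMod 3) := !![0,0,0,0,0,0,0,0,0,0;0,0,0,0,0,0,0,0,0,0;0,0,0,0,0,0,0,0,0,0;0,0,0,0,0,0,0,0,0,0;0,0,0,0,0,0,0,0,0,0;0,0,0,0,1,1,0,0,0,0;0,0,0,0,0,0,1,0,0,0;0,0,0,0,0,0,0,1,0,0;0,0,0,0,0,0,0,0,1,0;0,0,0,0,0,0,0,0,0,1]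
def EuA4B3 : Matrix (Fin 10) (Fin 10) (ZMod 3) := !![0,0,0,0,0,0,0,0,0,0;0,0,0,0,2,0,0,0,0,0;0,0,0,0,0,0,0,0,0,0;0,0,0,0,2,0,0,0,0,0;0,0,0,0,1,0,0,0,0,0;0,0,0,0,2,0,0,0,0,0;0,0,0,0,0,0,0,0,0,0;0,0,0,0,0,0,0,0,0,0;0,0,0,0,0,0,0,0,0,0;0,0,0,0,0,0,0,0,0,0]
lemma hAvA4B3 : AvA4B3 * HA4 = CA4B3 := by decide
lemma hAuA4B3 : AuA4B3 * HB3 = CA4B3 := by decide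
lemma hEvA4B3 : HA4 * EvA4B3 = 0 := by decide
lemma hEuA4B3 : HB3 * EuA4B3 = 0 := by decide
lemma hEA4B3 : EvA4B3 + EuA4B3 = 1 - GA4B3 * CA4B3 := by decide
def BA4B3 : Matrix (Fin 4) (Fin 4) (ZMod 3) := !![1,2,0,1;1,0,1,1;0,1,2,0;0,2,1,2]
lemma hGA4B3 : CA4B3 * GA4B3 = 1 := by decide
lemma hBA4B3 : BA4B3 * (AvA4B3 * FA4 - AuA4B3 * FB3) = 1 := by decide
def CA3B3 : Matrix (Fin 4) (Fin 10) (ZMod 3) := !![1,0,0,0,0,0,0,0,0,0;0,1,0,0,2,1,0,2,2,1;0,0,1,0,1,1,0,2,2,1;0,0,0,1,0,2,0,1,1,2]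
def AvA3B3 : Matrix (Fin 4) (Fin 5) (ZMod 3) := !![1,0,0,1,0;0,1,1,2,0;1,2,1,2,0;2,1,0,0,0]
def AuA3B3 : Matrix (Fin 4) (Fin 5) (ZMod 3) := !![0,0,2,2,0;2,1,1,1,2;1,2,2,0,2;2,2,1,1,1]
def GA3B3 : Matrix (Fin 10) (Fin 4) (ZMod 3) := !![1,0,0,0;0,1,0,0;0,0,1,0;0,0,0,1;0,0,0,0;0,0,0,0;0,0,0,0;0,0,0,0;0,0,0,0;0,0,0,0]
def EvA3B3 : Matrix (Fin 10) (Fin 10) (ZMod 3) := !![0,0,0,0,0,0,0,0,0,0;0,0,0,0,1,1,2,1,2,0;0,0,0,0,2,2,0,1,1,2;0,0,0,0,0,0,2,2,0,2;0,0,0,0,1,1,1,0,2,2;0,0,0,0,0,0,2,0,1,1;0,0,0,0,0,0,1,0,0,0;0,0,0,0,0,0,0,1,0,0;0,0,0,0,0,0,0,0,1,0;0,0,0,0,0,0,0,0,0,1]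
def EuA3B3 : Matrix (Fin 10) (Fin 10) (ZMod 3) := !![0,0,0,0,0,0,0,0,0,0;0,0,0,0,0,1,1,0,2,2;0,0,0,0,0,0,0,0,0,0;0,0,0,0,0,1,1,0,2,2;0,0,0,0,0,2,2,0,1,1;0,0,0,0,0,1,1,0,2,2;0,0,0,0,0,0,0,0,0,0;0,0,0,0,0,0,0,0,0,0;0,0,0,0,0,0,0,0,0,0;0,0,0,0,0,0,0,0,0,0]
lemma hAvA3B3 : AvA3B3 * HA3 = CA3B3 := by decide
lemma hAuA3B3 : AuA3B3 * HB3 = CA3B3 := by decide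
lemma hEvA3B3 : HA3 * EvA3B3 = 0 := by decide
lemma hEuA3B3 : HB3 * EuA3B3 = 0 := by decide
lemma hEA3B3 : EvA3B3 + EuA3B3 = 1 - GA3B3 * CA3B3 := by decide
def BA3B3 : Matrix (Fin 4) (Fin 4) (ZMod 3) := !![0,2,0,1;0,1,1,2;2,0,1,0;1,0,1,1]
lemma hGA3B3 : CA3B3 * GA3B3 = 1 := by decide
lemma hBA3B3 : BA3B3 * (AvA3B3 * FA3 - AuA3B3 * FB3) = 1 := by decide
def CA1B2 : Matrix (Fin 2) (Fin 10) (ZMod 3) := !![1,0,0,0,1,0,0,0,0,0;0,1,0,0,2,0,0,0,0,0]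
def AvA1B2 : Matrix (Fin 2) (Fin 5) (ZMod 3) := !![0,2,0,1,0;2,1,2,2,0]
def AuA1B2 : Matrix (Fin 2) (Fin 5) (ZMod 3) := !![2,0,2,1,0;0,2,1,0,0]
def GA1B2 : Matrix (Fin 10) (Fin 2) (ZMod 3) := !![1,0;0,1;0,0;0,0;0,0;0,0;0,0;0,0;0,0;0,0]
def EvA1B2 : Matrix (Fin 10) (Fin 10) (ZMod 3) := !![0,0,0,2,0,0,0,0,0,0;0,0,0,1,0,0,0,0,0,0;0,0,1,1,2,0,0,0,0,0;0,0,0,1,0,0,0,0,0,0;0,0,0,1,0,0,0,0,0,0;0,0,0,1,1,2,2,1,0,2;0,0,0,1,2,1,1,2,2,0;0,0,0,1,1,2,2,1,2,2;0,0,0,0,0,0,0,0,1,0;0,0,0,0,0,0,0,0,0,1]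
def EuA1B2 : Matrix (Fin 10) (Fin 10) (ZMod 3) := !![0,0,0,1,2,0,0,0,0,0;0,0,0,2,1,0,0,0,0,0;0,0,0,2,1,0,0,0,0,0;0,0,0,0,0,0,0,0,0,0;0,0,0,2,1,0,0,0,0,0;0,0,0,2,2,2,1,2,0,1;0,0,0,2,1,2,0,1,1,0;0,0,0,2,2,1,1,0,1,1;0,0,0,0,0,0,0,0,0,0;0,0,0,0,0,0,0,0,0,0]
lemma hAvA1B2 : AvA1B2 * HA1 = CA1B2 := by decide
lemma hAuA1B2 : AuA1B2 * HB2 = CA1B2 := by decide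
lemma hEvA1B2 : HA1 * EvA1B2 = 0 := by decide
lemma hEuA1B2 : HB2 * EuA1B2 = 0 := by decide
lemma hEA1B2 : EvA1B2 + EuA1B2 = 1 - GA1B2 * CA1B2 := by decide
lemma hDA1B2 : AvA1B2 * FA1 = AuA1B2 * FB2 := by decide
def CA3B2 : Matrix (Fin 2) (Fin 10) (ZMod 3) := !![1,0,2,2,2,0,0,0,0,0;0,1,0,1,2,0,0,0,0,0]
def AvA3B2 : Matrix (Fin 2) (Fin 5) (ZMod 3) := !![1,0,2,2,0;2,2,1,2,0]
def AuA3B2 : Matrix (Fin 2) (Fin 5) (ZMod 3) := !![1,2,1,1,0;2,2,0,2,0]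
def GA3B2 : Matrix (Fin 10) (Fin 2) (ZMod 3) := !![1,0;0,1;0,0;0,0;0,0;0,0;0,0;0,0;0,0;0,0]
def EvA3B2 : Matrix (Fin 10) (Fin 10) (ZMod 3) := !![0,0,0,0,0,0,0,0,0,0;0,0,1,0,2,0,0,0,0,0;0,0,2,1,1,0,0,0,0,0;0,0,0,1,0,0,0,0,0,0;0,0,1,1,2,0,0,0,0,0;0,0,2,0,2,2,2,1,2,0;0,0,1,0,1,1,1,2,2,1;0,0,2,2,2,2,2,1,1,1;0,0,0,0,0,0,0,0,1,0;0,0,0,0,0,0,0,0,0,1]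
def EuA3B2 : Matrix (Fin 10) (Fin 10) (ZMod 3) := !![0,0,1,1,1,0,0,0,0,0;0,0,2,2,2,0,0,0,0,0;0,0,2,2,2,0,0,0,0,0;0,0,0,0,0,0,0,0,0,0;0,0,2,2,2,0,0,0,0,0;0,0,1,0,1,2,1,2,1,0;0,0,2,0,2,2,0,1,1,2;0,0,1,1,1,1,1,0,2,2;0,0,0,0,0,0,0,0,0,0;0,0,0,0,0,0,0,0,0,0]
lemma hAvA3B2 : AvA3B2 * HA3 = CA3B2 := by decide
lemma hAuA3B2 : AuA3B2 * HB2 = CA3B2 := by decide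
lemma hEvA3B2 : HA3 * EvA3B2 = 0 := by decide
lemma hEuA3B2 : HB2 * EuA3B2 = 0 := by decide
lemma hEA3B2 : EvA3B2 + EuA3B2 = 1 - GA3B2 * CA3B2 := by decide
lemma hDA3B2 : AvA3B2 * FA3 = AuA3B2 * FB2 := by decide
def CA3B1 : Matrix (Fin 2) (Fin 10) (ZMod 3) := !![1,0,1,1,1,0,0,0,0,0;0,1,2,0,1,0,0,0,0,0]
def AvA3B1 : Matrix (Fin 2) (Fin 5) (ZMod 3) := !![1,0,1,0,0;2,2,0,0,0]
def AuA3B1 : Matrix (Fin 2) (Fin 5) (ZMod 3) := !![2,2,2,1,0;2,1,0,0,0]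
def GA3B1 : Matrix (Fin 10) (Fin 2) (ZMod 3) := !![1,0;0,1;0,0;0,0;0,0;0,0;0,0;0,0;0,0;0,0]
def EvA3B1 : Matrix (Fin 10) (Fin 10) (ZMod 3) := !![0,0,0,0,0,0,0,0,0,0;0,0,0,2,1,0,0,0,0,0;0,0,2,1,1,0,0,0,0,0;0,0,2,0,2,0,0,0,0,0;0,0,2,2,0,0,0,0,0,0;0,0,1,2,1,2,2,1,2,0;0,0,1,0,1,0,0,2,0,2;0,0,0,0,0,0,0,1,0,0;0,0,2,2,2,2,2,0,2,1;0,0,0,0,0,0,0,0,0,1]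
def EuA3B1 : Matrix (Fin 10) (Fin 10) (ZMod 3) := !![0,0,2,2,2,0,0,0,0,0;0,0,1,1,1,0,0,0,0,0;0,0,2,2,2,0,0,0,0,0;0,0,1,1,1,0,0,0,0,0;0,0,1,1,1,0,0,0,0,0;0,0,2,1,2,2,1,2,1,0;0,0,2,0,2,0,1,1,0,1;0,0,0,0,0,0,0,0,0,0;0,0,1,1,1,1,1,0,2,2;0,0,0,0,0,0,0,0,0,0]
lemma hAvA3B1 : AvA3B1 * HA3 = CA3B1 := by decide
lemma hAuA3B1 : AuA3B1 * HB1 = CA3B1 := by decide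
lemma hEvA3B1 : HA3 * EvA3B1 = 0 := by decide
lemma hEuA3B1 : HB1 * EuA3B1 = 0 := by decide
lemma hEA3B1 : EvA3B1 + EuA3B1 = 1 - GA3B1 * CA3B1 := by decide
lemma hDA3B1 : AvA3B1 * FA3 = AuA3B1 * FB1 := by decide

def FmX : Node7 → Matrix (Fin 5) (Fin 4) (ZMod 3)
  | .A1 => FA1 | .A2 => FA1 | .A3 => FA3 | .A4 => FA4
  | .B1 => FB1 | .B2 => FB2 | .B3 => FB3

def HmX : Node7 → Matrix (Fin 5) (Fin 10) (ZMod 3)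
  | .A1 => HA1 | .A2 => HA1 | .A3 => HA3 | .A4 => HA4
  | .B1 => HB1 | .B2 => HB2 | .B3 => HB3

end CDSData

open CDSData in
/-- **Rate `2/5` scheme for the instance of Figure 2.** There is a linear CDS
scheme over `𝔽₃` with secret length `L = 4` and signal length `N = 5` for the CDS
instance on nodes `A1, A2, A3, A4, B1, B2, B3` with qualified edges
`{A1,B1}, {A4,B1}, {A4,B2}, {A4,B3}, {A3,B3}` and unqualified edges
`{A1,B2}, {A3,B2}, {A3,B1}`; hence the linear rate `2/5` is achievable. -/
theorem cds_fig2_achievability :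
    ∃ (LZ : ℕ), 0 < LZ ∧
      ∃ (Fm : Node7 → Matrix (Fin 5) (Fin 4) (ZMod 3))
        (Hm : Node7 → Matrix (Fin 5) (Fin LZ) (ZMod 3)),
        (∀ v, (Hm v).rank = 5) ∧
        CorrectPair (ZMod 3) 4 5 LZ (Fm A1) (Fm B1) (Hm A1) (Hm B1) ∧
        CorrectPair (ZMod 3) 4 5 LZ (Fm A4) (Fm B1) (Hm A4) (Hm B1) ∧
        CorrectPair (ZMod 3) 4 5 LZ (Fm A4) (Fm B2) (Hm A4) (Hm B2) ∧
        CorrectPair (ZMod 3) 4 5 LZ (Fm A4) (Fm B3) (Hm A4) (Hm B3) ∧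
        CorrectPair (ZMod 3) 4 5 LZ (Fm A3) (Fm B3) (Hm A3) (Hm B3) ∧
        SecurePair (ZMod 3) 4 5 LZ (Fm A1) (Fm B2) (Hm A1) (Hm B2) ∧
        SecurePair (ZMod 3) 4 5 LZ (Fm A3) (Fm B2) (Hm A3) (Hm B2) ∧
        SecurePair (ZMod 3) 4 5 LZ (Fm A3) (Fm B1) (Hm A3) (Hm B1) := by
  refine ⟨10, by norm_num, FmX, HmX, ?_, ?_, ?_, ?_, ?_, ?_, ?_, ?_, ?_⟩
  · intro v
    cases v
    · exact CDSAux.rank_eq_of_rightInv hKA1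
    · exact CDSAux.rank_eq_of_rightInv hKA1
    · exact CDSAux.rank_eq_of_rightInv hKA3
    · exact CDSAux.rank_eq_of_rightInv hKA4
    · exact CDSAux.rank_eq_of_rightInv hKB1
    · exact CDSAux.rank_eq_of_rightInv hKB2
    · exact CDSAux.rank_eq_of_rightInv hKB3
  · exact CDSAux.correct_cert hKA1 hKB1 hAvA1B1 hAuA1B1 hEvA1B1 hEuA1B1 hEA1B1 hGA1B1 hBA1B1
  · exact CDSAux.correct_cert hKA4 hKB1 hAvA4B1 hAuA4B1 hEvA4B1 hEuA4B1 hEA4B1 hGA4B1 hBA4B1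
  · exact CDSAux.correct_cert hKA4 hKB2 hAvA4B2 hAuA4B2 hEvA4B2 hEuA4B2 hEA4B2 hGA4B2 hBA4B2
  · exact CDSAux.correct_cert hKA4 hKB3 hAvA4B3 hAuA4B3 hEvA4B3 hEuA4B3 hEA4B3 hGA4B3 hBA4B3
  · exact CDSAux.correct_cert hKA3 hKB3 hAvA3B3 hAuA3B3 hEvA3B3 hEuA3B3 hEA3B3 hGA3B3 hBA3B3
  · exact CDSAux.secure_cert hKA1 hKB2 hAvA1B2 hAuA1B2 hEvA1B2 hEuA1B2 hEA1B2 hDA1B2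
  · exact CDSAux.secure_cert hKA3 hKB2 hAvA3B2 hAuA3B2 hEvA3B2 hEuA3B2 hEA3B2 hDA3B2
  · exact CDSAux.secure_cert hKA3 hKB1 hAvA3B1 hAuA3B1 hEvA3B1 hEuA3B1 hEA3B1 hDA3B1
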